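/- Let A, B ∈ M₅(ℝ) be defined in the standard basis e₁,…,e₅ by A = diag(−2,−1,−1,0,0) and B·e₁ = 2e₂, B·e₂ = e₄, B·e₃ = 2e₅, B·e₄ = B·e₅ = 0. Then the only 4-dimensional subspaces of ℝ⁵ invariant under both A and B are span(e₂,e₃,e₄,e₅) and span(e₁,e₂,e₄,e₅). -/
import Mathlib

open Matrix

/-- `A = diag(−2,−1,−1,0,0)`. -/
def Amat : Matrix (Fin 5) (Fin 5) ℝ := Matrix.diagonal ![-2, -1, -1, 0, 0]

/-- `B` with `B·e₁ = 2e₂`, `B·e₂ = e₄`, `B·e₃ = 2e₅`, `B·e₄ = B·e₅ = 0`. -/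
def Bmat : Matrix (Fin 5) (Fin 5) ℝ :=
  !![0, 0, 0, 0, 0;
     2, 0, 0, 0, 0;
     0, 0, 0, 0, 0;
     0, 1, 0, 0, 0;
     0, 0, 2, 0, 0]

lemma single_smul5 (i : Fin 5) (a : ℝ) :
    (Pi.single i a : Fin 5 → ℝ) = a • (Pi.single i 1 : Fin 5 → ℝ) := by
  funext j; simp [Pi.single_apply, mul_ite]

lemma single_mem_span (s : Set (Fin 5 → ℝ)) (j : Fin 5) (a : ℝ)
    (h : (Pi.single j 1 : Fin 5 → ℝ) ∈ s) :
    (Pi.single j a : Fin 5 → ℝ) ∈ Submodule.span ℝ s := by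
  rw [single_smul5]
  exact Submodule.smul_mem _ _ (Submodule.subset_span h)

lemma phi_expand (φ : (Fin 5 → ℝ) →ₗ[ℝ] ℝ) (x : Fin 5 → ℝ) :
    φ x = x 0 * φ (Pi.single 0 1) + x 1 * φ (Pi.single 1 1) + x 2 * φ (Pi.single 2 1)
      + x 3 * φ (Pi.single 3 1) + x 4 * φ (Pi.single 4 1) := by
  have hs : ∀ i : Fin 5, (Pi.single i (x i) : Fin 5 → ℝ) = x i • (Pi.single i 1 : Fin 5 → ℝ) :=
    fun i => single_smul5 i (x i)
  conv_lhs => rw [← Finset.univ_sum_single x]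
  rw [map_sum, Fin.sum_univ_five]
  simp only [hs, LinearMap.map_smul, smul_eq_mul]

lemma Amulvec (x : Fin 5 → ℝ) : Amat.mulVec x = ![-2*x 0, -x 1, -x 2, 0, 0] := by
  funext i; fin_cases i <;> simp [Amat, Matrix.mulVec_diagonal]

lemma Bmulvec (x : Fin 5 → ℝ) : Bmat.mulVec x = ![0, 2*x 0, 0, x 1, 2*x 2] := by
  funext i; fin_cases i <;> simp [Bmat, Matrix.mulVec, dotProduct, Fin.sum_univ_five]

theorem invariant_hyperplanes_of_sol2 (W : Submodule ℝ (Fin 5 → ℝ))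
    (hdim : Module.finrank ℝ W = 4)
    (hA : ∀ x ∈ W, Amat.mulVec x ∈ W)
    (hB : ∀ x ∈ W, Bmat.mulVec x ∈ W) :
    W = Submodule.span ℝ {(Pi.single 1 1 : Fin 5 → ℝ), Pi.single 2 1,
          Pi.single 3 1, Pi.single 4 1} ∨
    W = Submodule.span ℝ {(Pi.single 0 1 : Fin 5 → ℝ), Pi.single 1 1,
          Pi.single 3 1, Pi.single 4 1} := by
  -- get a functional with kernel W
  obtain ⟨φ, hker⟩ : ∃ φ : (Fin 5 → ℝ) →ₗ[ℝ] ℝ, LinearMap.ker φ = W := by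
    have hfin : Module.finrank ℝ ((Fin 5 → ℝ) ⧸ W) = 1 := by
      have := Submodule.finrank_quotient_add_finrank W
      simp [hdim, Module.finrank_pi] at this
      omega
    have e : ((Fin 5 → ℝ) ⧸ W) ≃ₗ[ℝ] ℝ := LinearEquiv.ofFinrankEq _ _ (by simp [hfin])
    refine ⟨e.toLinearMap ∘ₗ W.mkQ, ?_⟩
    rw [LinearMap.ker_comp, LinearEquiv.ker, Submodule.comap_bot, Submodule.ker_mkQ]
  set c : Fin 5 → ℝ := fun i => φ (Pi.single i 1) with hc
  have hmem : ∀ x : Fin 5 → ℝ, x ∈ W ↔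
      x 0 * c 0 + x 1 * c 1 + x 2 * c 2 + x 3 * c 3 + x 4 * c 4 = 0 := by
    intro x
    rw [← hker, LinearMap.mem_ker, phi_expand]
  -- invariance conditions
  have hA' : ∀ x ∈ W, (-2*x 0) * c 0 + (-x 1) * c 1 + (-x 2) * c 2 = 0 := by
    intro x hx
    have := (hmem _).mp (hA x hx)
    rw [Amulvec] at this
    simpa using this
  have hB' : ∀ x ∈ W, (2*x 0) * c 1 + x 1 * c 3 + (2*x 2) * c 4 = 0 := by
    intro x hx
    have := (hmem _).mp (hB x hx)
    rw [Bmulvec] at this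
    simpa using this
  -- derive equations from test vectors
  have h3 : c 3 = 0 := by
    have hm : (![0, c 3, 0, -(c 1), 0] : Fin 5 → ℝ) ∈ W := by
      rw [hmem]; simp; ring
    have := hB' _ hm
    simp at this
    nlinarith [this, sq_nonneg (c 3)]
  have h1 : c 1 = 0 := by
    have hm : (![c 1, -(c 0), 0, 0, 0] : Fin 5 → ℝ) ∈ W := by
      rw [hmem]; simp; ring
    have := hB' _ hm
    simp [h3] at this
    nlinarith [this, sq_nonneg (c 1)]
  have h4 : c 4 = 0 := by
    have hm : (![0, 0, c 4, 0, -(c 2)] : Fin 5 → ℝ) ∈ W := by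
      rw [hmem]; simp; ring
    have := hB' _ hm
    simp at this
    nlinarith [this, sq_nonneg (c 4)]
  have h02 : c 0 * c 2 = 0 := by
    have hm : (![c 2, 0, -(c 0), 0, 0] : Fin 5 → ℝ) ∈ W := by
      rw [hmem]; simp; ring
    have := hA' _ hm
    simp at this
    nlinarith [this]
  -- c is nonzero
  have hne : ¬ (c 0 = 0 ∧ c 2 = 0) := by
    rintro ⟨h0, h2⟩
    have hWtop : W = ⊤ := by
      rw [Submodule.eq_top_iff']
      intro x
      rw [hmem, h0, h1, h2, h3, h4]; ring
    rw [hWtop, finrank_top] at hdim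
    simp [Module.finrank_pi] at hdim
  rcases mul_eq_zero.mp h02 with h0 | h2
  · -- c 0 = 0, so c 2 ≠ 0 : W = {x | x 2 = 0}
    have h2ne : c 2 ≠ 0 := fun h => hne ⟨h0, h⟩
    right
    apply le_antisymm
    · intro x hx
      have hx2 : x 2 = 0 := by
        have := (hmem _).mp hx
        rw [h0, h1, h3, h4] at this
        have : x 2 * c 2 = 0 := by linarith
        exact (mul_eq_zero.mp this).resolve_right h2ne
      have hrw : x = (Pi.single 0 (x 0) : Fin 5 → ℝ) + Pi.single 1 (x 1)
          + Pi.single 3 (x 3) + Pi.single 4 (x 4) := by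
        conv_lhs => rw [← Finset.univ_sum_single x]
        rw [Fin.sum_univ_five, hx2]
        simp
      rw [hrw]
      refine Submodule.add_mem _ (Submodule.add_mem _ (Submodule.add_mem _ ?_ ?_) ?_) ?_ <;>
        exact single_mem_span _ _ _ (by simp)
    · rw [Submodule.span_le]
      rintro y (rfl | rfl | rfl | rfl) <;>
        · rw [SetLike.mem_coe, hmem]
          simp [Pi.single_apply, h0, h1, h3, h4]
  · -- c 2 = 0, so c 0 ≠ 0 : W = {x | x 0 = 0}
    have h0ne : c 0 ≠ 0 := fun h => hne ⟨h, h2⟩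
    left
    apply le_antisymm
    · intro x hx
      have hx0 : x 0 = 0 := by
        have := (hmem _).mp hx
        rw [h1, h2, h3, h4] at this
        have : x 0 * c 0 = 0 := by linarith
        exact (mul_eq_zero.mp this).resolve_right h0ne
      have hrw : x = (Pi.single 1 (x 1) : Fin 5 → ℝ) + Pi.single 2 (x 2)
          + Pi.single 3 (x 3) + Pi.single 4 (x 4) := by
        conv_lhs => rw [← Finset.univ_sum_single x]
        rw [Fin.sum_univ_five, hx0]
        simp
      rw [hrw]
      refine Submodule.add_mem _ (Submodule.add_mem _ (Submodule.add_mem _ ?_ ?_) ?_) ?_ <;>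
        exact single_mem_span _ _ _ (by simp)
    · rw [Submodule.span_le]
      rintro y (rfl | rfl | rfl | rfl) <;>
        · rw [SetLike.mem_coe, hmem]
          simp [Pi.single_apply, h1, h2, h3, h4]
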